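/- If D is Hermitian positive definite, then c̃ = D^{-1}[ Σ_{i=1}^{N} B_i^H Σ_i^{-1} v_i − M^H A^{-1} (Σ_{i=1}^{N} x_i^* Σ_i^{-1} v_i) ] is the unique minimizer over c ∈ ℂ^L of the function C(c) = Σ_{i=1}^{N} (v_i − B_i c)^H Σ_i^{-1} (v_i − B_i c) − (Σ_{i=1}^{N} x_i^* Σ_i^{-1} (v_i − B_i c))^H A^{-1} (Σ_{i=1}^{N} x_i^* Σ_i^{-1} (v_i − B_i c)). (This is the optimality of the EIC estimate in Step 2 of the JML-MAP procedure of the paper.) -/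

import Mathlib

open Matrix BigOperators
open scoped ComplexOrder

private lemma dp_sum {m : Type*} [Fintype m] {ι : Type*} (s : Finset ι)
    (c : m → ℂ) (f : ι → m → ℂ) :
    c ⬝ᵥ (∑ i ∈ s, f i) = ∑ i ∈ s, c ⬝ᵥ f i := by
  simp only [dotProduct, Finset.sum_apply, Finset.mul_sum]
  exact Finset.sum_comm

private lemma sum_dp {m : Type*} [Fintype m] {ι : Type*} (s : Finset ι)
    (c : m → ℂ) (f : ι → m → ℂ) :
    (∑ i ∈ s, f i) ⬝ᵥ c = ∑ i ∈ s, f i ⬝ᵥ c := by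
  simp only [dotProduct, Finset.sum_apply, Finset.sum_mul]
  exact Finset.sum_comm

private lemma sum_mV {m n : Type*} [Fintype m] [Fintype n] {ι : Type*} (s : Finset ι)
    (f : ι → Matrix m n ℂ) (c : n → ℂ) :
    (∑ i ∈ s, f i) *ᵥ c = ∑ i ∈ s, f i *ᵥ c := by
  ext j
  simp only [mulVec, dotProduct, Finset.sum_apply, Matrix.sum_apply, Finset.sum_mul]
  exact Finset.sum_comm

private lemma quad_expand {n m : Type*} [Fintype n] [Fintype m] [DecidableEq m]
    (P : Matrix n n ℂ) (hP : Pᴴ = P) (Z : Matrix n m ℂ) (y : n → ℂ) (c : m → ℂ) :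
    star (y - Z *ᵥ c) ⬝ᵥ (P *ᵥ (y - Z *ᵥ c))
      = star y ⬝ᵥ (P *ᵥ y) - star c ⬝ᵥ (Zᴴ *ᵥ (P *ᵥ y)) - star (Zᴴ *ᵥ (P *ᵥ y)) ⬝ᵥ c
        + star c ⬝ᵥ ((Zᴴ * P * Z) *ᵥ c) := by
  simp [star_sub, sub_dotProduct, dotProduct_sub, mulVec_sub, star_mulVec, dotProduct_mulVec,
    Matrix.mulVec_mulVec, conjTranspose_mul, hP, vecMul_vecMul, Matrix.sub_vecMul, Matrix.mul_assoc]
  ring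

theorem eic_estimate_unique_minimizer
    (Nr L N : ℕ) (hNr : 0 < Nr) (hL : 0 < L) (hN : 0 < N)
    (S : Fin N → Matrix (Fin Nr) (Fin Nr) ℂ)
    (hS : ∀ i, (S i).PosDef)
    (x : Fin N → ℂ)
    (B : Fin N → Matrix (Fin Nr) (Fin L) ℂ)
    (v : Fin N → (Fin Nr → ℂ))
    (A : Matrix (Fin Nr) (Fin Nr) ℂ)
    (hA : A = 1 + ∑ i, ((Complex.normSq (x i) : ℂ)) • (S i)⁻¹)
    (hApd : A.PosDef)
    (M : Matrix (Fin Nr) (Fin L) ℂ)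
    (hM : M = ∑ i, (starRingEnd ℂ) (x i) • ((S i)⁻¹ * B i))
    (D : Matrix (Fin L) (Fin L) ℂ)
    (hD : D = (∑ i, (B i)ᴴ * (S i)⁻¹ * B i) - Mᴴ * A⁻¹ * M)
    (hDpd : D.PosDef)
    (ctil : Fin L → ℂ)
    (hctil : ctil = D⁻¹ *ᵥ ((∑ i, (B i)ᴴ *ᵥ ((S i)⁻¹ *ᵥ v i))
        - Mᴴ *ᵥ (A⁻¹ *ᵥ (∑ i, (starRingEnd ℂ) (x i) • ((S i)⁻¹ *ᵥ v i)))))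
    (Cf : (Fin L → ℂ) → ℂ)
    (hCf : ∀ c, Cf c
        = (∑ i, star (v i - B i *ᵥ c) ⬝ᵥ ((S i)⁻¹ *ᵥ (v i - B i *ᵥ c)))
          - star (∑ i, (starRingEnd ℂ) (x i) • ((S i)⁻¹ *ᵥ (v i - B i *ᵥ c))) ⬝ᵥ
              (A⁻¹ *ᵥ (∑ i, (starRingEnd ℂ) (x i) • ((S i)⁻¹ *ᵥ (v i - B i *ᵥ c))))) :
    ∀ c : Fin L → ℂ, c ≠ ctil → (Cf ctil).re < (Cf c).re := by
  -- abbreviations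
  set u0 : Fin Nr → ℂ := ∑ i, (starRingEnd ℂ) (x i) • ((S i)⁻¹ *ᵥ v i) with hu0
  set p : Fin L → ℂ := ∑ i, (B i)ᴴ *ᵥ ((S i)⁻¹ *ᵥ v i) with hp
  set w : Fin L → ℂ := p - Mᴴ *ᵥ (A⁻¹ *ᵥ u0) with hw
  have hSinv : ∀ i, ((S i)⁻¹)ᴴ = (S i)⁻¹ := fun i => (hS i).inv.isHermitian
  have hAinv : (A⁻¹)ᴴ = A⁻¹ := hApd.inv.isHermitian
  have hDH : Dᴴ = D := hDpd.isHermitian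
  -- the affine form of the inner sum
  have hu : ∀ c : Fin L → ℂ,
      (∑ i, (starRingEnd ℂ) (x i) • ((S i)⁻¹ *ᵥ (v i - B i *ᵥ c))) = u0 - M *ᵥ c := by
    intro c
    rw [hu0, hM, sum_mV, ← Finset.sum_sub_distrib]
    congr 1; ext i
    simp [mulVec_sub, smul_sub, Matrix.smul_mulVec, Matrix.mulVec_mulVec, mul_sub]
  -- expansion of Cf
  have hCfe : ∀ c : Fin L → ℂ,
      Cf c = ((∑ i, star (v i) ⬝ᵥ ((S i)⁻¹ *ᵥ v i)) - star u0 ⬝ᵥ (A⁻¹ *ᵥ u0))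
        - star c ⬝ᵥ w - star w ⬝ᵥ c + star c ⬝ᵥ (D *ᵥ c) := by
    intro c
    rw [hCf c, hu c]
    have h1 : ∀ i : Fin N, star (v i - B i *ᵥ c) ⬝ᵥ ((S i)⁻¹ *ᵥ (v i - B i *ᵥ c))
        = star (v i) ⬝ᵥ ((S i)⁻¹ *ᵥ v i)
          - star c ⬝ᵥ ((B i)ᴴ *ᵥ ((S i)⁻¹ *ᵥ v i))
          - star ((B i)ᴴ *ᵥ ((S i)⁻¹ *ᵥ v i)) ⬝ᵥ c
          + star c ⬝ᵥ (((B i)ᴴ * (S i)⁻¹ * B i) *ᵥ c) :=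
      fun i => quad_expand _ (hSinv i) _ _ _
    rw [Finset.sum_congr rfl (fun i _ => h1 i),
      quad_expand (A⁻¹) hAinv M u0 c]
    simp only [Finset.sum_add_distrib, Finset.sum_sub_distrib,
      ← dp_sum, ← sum_dp, ← star_sum, ← sum_mV, ← hp]
    rw [hw, hD]
    simp only [star_sub, sub_dotProduct, dotProduct_sub, Matrix.sub_mulVec]
    ring
  -- D *ᵥ ctil = w
  have : Invertible D := hDpd.isUnit.invertible
  have hwD : D *ᵥ ctil = w := by
    rw [hctil, Matrix.mulVec_mulVec, Matrix.mul_inv_of_invertible, Matrix.one_mulVec,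
      hw, hp, hu0]
  -- key identity
  have key : ∀ c : Fin L → ℂ, Cf c = Cf ctil + star (c - ctil) ⬝ᵥ (D *ᵥ (c - ctil)) := by
    intro c
    rw [hCfe c, hCfe ctil, ← hwD]
    simp only [star_sub, sub_dotProduct, dotProduct_sub, mulVec_sub, star_mulVec,
      dotProduct_mulVec, hDH, Matrix.sub_vecMul]
    ring
  intro c hc
  have hq := hDpd.dotProduct_mulVec_pos (sub_ne_zero.mpr hc)
  have hre : 0 < (star (c - ctil) ⬝ᵥ (D *ᵥ (c - ctil))).re := by
    simpa using (Complex.lt_def.mp hq).1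
  have := key c
  rw [this, Complex.add_re]
  linarith
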